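/- Let 0 → J → B' → B → 0 be a square-zero extension of commutative rings (J² = 0) and N a B-module. If there exists a lifting of N along q : B' → B (i.e., a B'-module N' with a surjection α : N' → N whose kernel is isomorphic to N ⊗_B J via the natural map), then the 4-term exact sequence 0 → N ⊗_B J → N̄₁' → F̄₀ → N → 0, obtained by tensoring a B'-free presentation 0 → N₁' → F₀ → N → 0 of N with B, represents the zero class in Ext²_B(N, N ⊗_B J). -/

import Mathlib

open TensorProduct CategoryTheory MonoidalCategory Function Limits

namespace Stmt3Aux

variable (R : Type) [CommRing R] (I : Ideal R)

/-- multiplication map `I ⊗ M → M`. -/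
noncomputable def mulMap (M : Type) [AddCommGroup M] [Module R M] : (↥I ⊗[R] M) →ₗ[R] M :=
  TensorProduct.lift ((LinearMap.lsmul R M).comp I.subtype)

@[simp] lemma mulMap_tmul (M : Type) [AddCommGroup M] [Module R M] (c : I) (m : M) :
    mulMap R I M (c ⊗ₜ m) = (c : R) • m := rfl

lemma range_mulMap (M : Type) [AddCommGroup M] [Module R M] :
    LinearMap.range (mulMap R I M) = (I • ⊤ : Submodule R M) := by
  apply le_antisymm
  · rintro _ ⟨t, rfl⟩
    induction t with
    | zero => simp
    | tmul c m => simpa using Submodule.smul_mem_smul c.2 (Submodule.mem_top (R := R))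
    | add x y hx hy => rw [map_add]; exact Submodule.add_mem _ hx hy
  · intro x hx
    refine Submodule.smul_induction_on hx (fun c hc m _ => ⟨⟨c, hc⟩ ⊗ₜ m, rfl⟩) ?_
    rintro x y ⟨u, rfl⟩ ⟨v, rfl⟩; exact ⟨u + v, map_add _ _ _⟩

/-- first differential of the free resolution of `R ⧸ I`. -/
noncomputable def resD : ((↥I) →₀ R) →ₗ[R] R :=
  Finsupp.linearCombination R (fun j : I => (j : R))

lemma range_resD : LinearMap.range (resD R I) = I := by
  rw [resD, Finsupp.range_linearCombination,
    show (Set.range fun j : I => (j : R)) = (I : Set R) from Subtype.range_coe,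
    Submodule.span_eq]

instance : CategoryTheory.Projective (ModuleCat.of R R) :=
  (IsProjective.iff_projective _).mp inferInstance

instance : CategoryTheory.Projective (ModuleCat.of R ((↥I) →₀ R)) :=
  (IsProjective.iff_projective _).mp inferInstance

/-- A free resolution of `R ⧸ I`. -/
noncomputable def resComplex : ChainComplex (ModuleCat R) ℕ :=
  ChainComplex.mk' (ModuleCat.of R R) (ModuleCat.of R ((↥I) →₀ R)) (ModuleCat.ofHom (resD R I))
    (fun f => ⟨Projective.syzygies f, Projective.d f, by
      show (Projective.π _ ≫ kernel.ι f) ≫ f = 0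
      simp⟩)

lemma resComplex_d_1_0 : (resComplex R I).d 1 0 = ModuleCat.ofHom (resD R I) := by
  simp [resComplex]

instance (n : ℕ) : CategoryTheory.Projective ((resComplex R I).X n) := by
  obtain (_ | _ | _ | n) := n
  · exact inferInstanceAs (Projective (ModuleCat.of R R))
  · exact inferInstanceAs (Projective (ModuleCat.of R ((↥I) →₀ R)))
  · apply Projective.projective_over
  · apply Projective.projective_over

lemma d_comp_self_syzygies {C : Type*} [Category C] [Abelian C] [EnoughProjectives C]
    {Y Z : C} (g : Y ⟶ Z) : Projective.d g ≫ g = 0 := by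
  show (Projective.π _ ≫ kernel.ι g) ≫ g = 0; simp

lemma exact_of_syzygies_iso {C : Type*} [Category C] [Abelian C] [EnoughProjectives C]
    {X Y Z : C} (g : Y ⟶ Z) (e : X ≅ Projective.syzygies g) (f : X ⟶ Y)
    (hf : f = e.hom ≫ Projective.d g) (w : f ≫ g = 0) : (ShortComplex.mk f g w).Exact := by
  subst hf
  let α : ShortComplex.mk _ g w ⟶ ShortComplex.mk (Projective.d g) g (d_comp_self_syzygies g) :=
    { τ₁ := e.hom
      τ₂ := 𝟙 _
      τ₃ := 𝟙 _ }
  rw [ShortComplex.exact_iff_of_epi_of_isIso_of_mono α]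
  exact exact_d_f g

lemma resComplex_exactAt_succ (n : ℕ) : (resComplex R I).ExactAt (n + 1) := by
  rw [HomologicalComplex.exactAt_iff' _ (n + 1 + 1) (n + 1) n (by simp) (by simp)]
  exact exact_of_syzygies_iso _ (ChainComplex.mk'XIso _ _ _ _ n) _ (ChainComplex.mk'_d _ _ _ _ n) _

end Stmt3Aux

namespace Stmt3Aux

variable (R : Type) [CommRing R] (I : Ideal R)

lemma resD_comp_mkQ :
    ModuleCat.ofHom (resD R I) ≫ ModuleCat.ofHom (I.mkQ) = 0 := by
  refine ModuleCat.hom_ext (LinearMap.ext fun x => ?_)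
  have hx := LinearMap.mem_range_self (resD R I) x
  rw [range_resD R I] at hx
  change I.mkQ (resD R I x) = 0
  rw [Submodule.mkQ_apply]
  exact (Submodule.Quotient.mk_eq_zero _).2 hx

/-- The projective resolution of `R ⧸ I` given by `resComplex`. -/
noncomputable def resolution : ProjectiveResolution (ModuleCat.of R (R ⧸ I)) where
  complex := resComplex R I
  π := (ChainComplex.toSingle₀Equiv _ _).symm ⟨ModuleCat.ofHom (I.mkQ), by
        rw [resComplex_d_1_0]; exact resD_comp_mkQ R I⟩
  quasiIso := ⟨fun n => by
    cases n with
    | zero =>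
      rw [ChainComplex.quasiIsoAt₀_iff, ShortComplex.quasiIso_iff_of_zeros']
      · refine (ShortComplex.exact_and_epi_g_iff_of_iso
            (S₂ := ShortComplex.mk (ModuleCat.ofHom (resD R I)) (ModuleCat.ofHom I.mkQ)
              (resD_comp_mkQ R I)) ?_).2 ⟨?_, ?_⟩
        · exact ShortComplex.isoMk (Iso.refl _) (Iso.refl _) (Iso.refl _)
            (by simp [resComplex_d_1_0]; rfl) (by simp; rfl)
        · rw [ShortComplex.moduleCat_exact_iff_range_eq_ker]
          change LinearMap.range (resD R I) = LinearMap.ker I.mkQ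
          rw [range_resD, Submodule.ker_mkQ]
        · exact (ModuleCat.epi_iff_surjective _).2 (Submodule.mkQ_surjective I)
      all_goals rfl
    | succ n =>
      rw [quasiIsoAt_iff_exactAt']
      · apply resComplex_exactAt_succ
      · apply ChainComplex.exactAt_succ_single_obj⟩

end Stmt3Aux

namespace Stmt3Aux

variable (R : Type) [CommRing R] (I : Ideal R)

lemma subtype_comp_psi :
    I.subtype ∘ₗ Finsupp.linearCombination R (id : ↥I → ↥I) = resD R I := by
  refine Finsupp.lhom_ext fun a b => ?_
  simp [resD, Finsupp.linearCombination_single]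

lemma injective_mulMap (M : Type) [AddCommGroup M] [Module R M]
    (h : Subsingleton (((Tor (ModuleCat R) 1).obj (ModuleCat.of R M)).obj
      (ModuleCat.of R (R ⧸ I)))) :
    Injective (mulMap R I M) := by
  classical
  let P := resolution R I
  let F := tensorLeft (ModuleCat.of R M)
  let TC := (F.mapHomologicalComplex _).obj P.complex
  have hiso : ((F.leftDerived 1).obj (ModuleCat.of R (R ⧸ I))) ≅
      (HomologicalComplex.homologyFunctor _ _ 1).obj TC := P.isoLeftDerivedObj F 1
  haveI hsub : Subsingleton ((F.leftDerived 1).obj (ModuleCat.of R (R ⧸ I))) := h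
  have hz0 : Limits.IsZero ((F.leftDerived 1).obj (ModuleCat.of R (R ⧸ I))) :=
    ModuleCat.isZero_of_subsingleton _
  have hz : Limits.IsZero ((HomologicalComplex.homologyFunctor (ModuleCat R) _ 1).obj TC) :=
    hz0.of_iso hiso.symm
  have hexact : TC.ExactAt 1 := by
    rw [HomologicalComplex.exactAt_iff_isZero_homology]
    simpa using hz
  rw [HomologicalComplex.exactAt_iff' _ 2 1 0 (by simp) (by simp)] at hexact
  have hex := (ShortComplex.moduleCat_exact_iff _).1 hexact
  refine (injective_iff_map_eq_zero _).2 fun t ht => ?_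
  obtain ⟨S, hS⟩ := TensorProduct.exists_finset t
  let ψ : ((↥I) →₀ R) →ₗ[R] ↥I := Finsupp.linearCombination R (id : ↥I → ↥I)
  let χ : (M ⊗[R] ((↥I) →₀ R)) →ₗ[R] (↥I ⊗[R] M) :=
    (TensorProduct.comm R M ↥I).toLinearMap ∘ₗ LinearMap.lTensor M ψ
  let z : M ⊗[R] ((↥I) →₀ R) := ∑ i ∈ S, i.2 ⊗ₜ Finsupp.single i.1 1
  -- `z` is a cycle
  have hd10 : TC.d 1 0 = F.map (P.complex.d 1 0) := rfl
  have hcycle : (TC.d 1 0) (z : M ⊗[R] ((↥I) →₀ R)) = 0 := by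
    rw [hd10]
    have : (F.map (P.complex.d 1 0)) z
        = ∑ i ∈ S, i.2 ⊗ₜ[R] ((i.1 : R) : R) := by
      erw [map_sum]
      refine Finset.sum_congr rfl fun i _ => ?_
      change i.2 ⊗ₜ[R] (resD R I (Finsupp.single i.1 1)) = _
      rw [resD, Finsupp.linearCombination_single, one_smul]
    refine this.trans ?_
    apply (TensorProduct.rid R M).injective
    rw [map_sum]
    erw [map_zero]
    have : ∑ i ∈ S, (TensorProduct.rid R M) (i.2 ⊗ₜ[R] ((i.1 : R)))
        = mulMap R I M t := by
      rw [hS, map_sum]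
      exact Finset.sum_congr rfl fun i _ => by simp
    rw [this, ht]
  obtain ⟨w, hw⟩ := hex z hcycle
  -- push the boundary relation down to `I ⊗ M`
  have hψd : ∀ p2 : (P.complex.X 2), ψ ((P.complex.d 2 1) p2) = 0 := by
    intro p2
    have h0 : (resD R I) ((P.complex.d 2 1) p2) = 0 := by
      have := P.complex.d_comp_d 2 1 0
      have h2 : ((P.complex.d 2 1) ≫ (P.complex.d 1 0)) p2 = 0 := by rw [this]; rfl
      rw [show P.complex.d 1 0 = ModuleCat.ofHom (resD R I) from resComplex_d_1_0 R I] at h2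
      exact h2
    have : (I.subtype) (ψ ((P.complex.d 2 1) p2)) = 0 := by
      exact (LinearMap.congr_fun (subtype_comp_psi R I) ((P.complex.d 2 1) p2)).trans h0
    exact Subtype.ext this
  have hχw : ∀ w' : M ⊗[R] (P.complex.X 2), χ ((TC.d 2 1) w') = 0 := by
    intro w'
    have hd21 : TC.d 2 1 = F.map (P.complex.d 2 1) := rfl
    rw [hd21]
    induction w' using TensorProduct.induction_on with
    | zero => erw [map_zero]
    | tmul m p => 
      change χ (m ⊗ₜ ((P.complex.d 2 1) p)) = 0
      change (TensorProduct.comm R M ↥I) (m ⊗ₜ ψ ((P.complex.d 2 1) p)) = 0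
      rw [hψd, TensorProduct.tmul_zero, map_zero]
    | add x y hx hy =>
      exact (congrArg χ (map_add (ConcreteCategory.hom (F.map (P.complex.d 2 1))) x y)).trans
        ((map_add χ _ _).trans ((congrArg₂ (· + ·) hx hy).trans (add_zero 0)))
  have hχz : χ z = t := by
    have : χ z = ∑ i ∈ S, (i.1 ⊗ₜ[R] i.2 : ↥I ⊗[R] M) := by
      rw [map_sum]
      refine Finset.sum_congr rfl fun i _ => ?_
      change (TensorProduct.comm R M ↥I) ((LinearMap.lTensor M ψ) (i.2 ⊗ₜ _)) = _
      rw [LinearMap.lTensor_tmul]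
      have : ψ (Finsupp.single i.1 1) = i.1 := by
        simp [ψ, Finsupp.linearCombination_single]
      rw [this, TensorProduct.comm_tmul]
    rw [this, ← hS]
  have hw' : (TC.d 2 1) w = z := hw
  rw [← hχz, ← hw']
  exact hχw w

end Stmt3Aux

open TensorProduct CategoryTheory MonoidalCategory Function Limits

namespace Stmt3Aux

lemma smul_smul_top_zero {R : Type} [CommRing R] {I : Ideal R} (hI : I * I = ⊥)
    {M : Type} [AddCommGroup M] [Module R M] {c : R} (hc : c ∈ I)
    {m : M} (hm : m ∈ (I • ⊤ : Submodule R M)) : c • m = 0 := by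
  refine Submodule.smul_induction_on hm (fun d hd n _ => ?_) (fun x y hx hy => ?_)
  · rw [smul_smul]
    have h2 : c * d ∈ I * I := Ideal.mul_mem_mul hc hd
    rw [hI] at h2
    rw [(Submodule.mem_bot R).1 h2, zero_smul]
  · rw [smul_add, hx, hy, add_zero]

lemma smul_quot_zero {R : Type} [CommRing R] {I : Ideal R} {M : Type} [AddCommGroup M]
    [Module R M] {c : R} (hc : c ∈ I) (q : M ⧸ (I • ⊤ : Submodule R M)) : c • q = 0 := by
  obtain ⟨m, rfl⟩ := Submodule.Quotient.mk_surjective _ q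
  rw [← Submodule.Quotient.mk_smul, Submodule.Quotient.mk_eq_zero]
  exact Submodule.smul_mem_smul hc (Submodule.mem_top (R := R))

end Stmt3Aux


set_option maxHeartbeats 1000000 in
/-- Let `0 → J → B' → B → 0` be a square-zero extension of commutative
rings (`J² = 0`, `B = B'/J`) and `N` a `B`-module.  Tensoring a `B'`-free presentation
`0 → N₁' → F₀ → N → 0` with `B` gives a 4-term exact sequence
`0 → N ⊗_B J → N̄₁' → F̄₀ → N → 0` (whose leftmost term, the kernel `T` of
`N̄₁' → F̄₀`, is naturally `N ⊗_B J`).  If there exists a lifting of `N` along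
`q : B' → B` (a `B'`-module `N''` with `N'' ⊗_{B'} B ≅ N` and `Tor₁^{B'}(N'', B) = 0`),
then this 4-term sequence represents the zero class in `Ext²_B(N, N ⊗_B J)`;
equivalently, the extension `0 → T → N̄₁' → C → 0` (where `C = im(N̄₁' → F̄₀)`) extends
to an extension `0 → T → Z → F̄₀ → 0` of `B`-modules: there are `Z`, `j`, `p`, `g` as
below trivializing the 2-fold extension class. -/
theorem stmt3
    (B' : Type) [CommRing B'] (J : Ideal B') (hJ : J * J = ⊥)
    (N : Type) [AddCommGroup N] [Module B' N] [Module (B' ⧸ J) N]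
    [IsScalarTower B' (B' ⧸ J) N]
    (F₀ : Type) [AddCommGroup F₀] [Module B' F₀] [Module.Free B' F₀]
    (ε : F₀ →ₗ[B'] N) (hε : Surjective ε)
    -- the reduction mod `J` of the inclusion `N₁' = ker ε ⊆ F₀` and of `ε`
    (ιbar : ((LinearMap.ker ε) ⧸ (J • ⊤ : Submodule B' (LinearMap.ker ε))) →ₗ[B']
      (F₀ ⧸ (J • ⊤ : Submodule B' F₀)))
    (hιbar : ∀ x : LinearMap.ker ε,
      ιbar (Submodule.Quotient.mk x) = Submodule.Quotient.mk (x : F₀))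
    -- existence of a lifting of `N` along `B' → B' ⧸ J`
    (hlift : ∃ (N'' : Type) (_ : AddCommGroup N'') (_ : Module B' N''),
      Nonempty ((N'' ⊗[B'] (B' ⧸ J)) ≃ₗ[B'] N) ∧
      Subsingleton (((Tor (ModuleCat B') 1).obj (ModuleCat.of B' N'')).obj
        (ModuleCat.of B' (B' ⧸ J)))) :
    -- the 2-fold extension class `ob(q, N)` vanishes: the extension of `im ιbar` by
    -- `T = ker ιbar` given by `N̄₁'` extends to an extension `Z` of `F̄₀` by `T`,
    -- in the category of `B`-modules
    ∃ (Z : Type) (_ : AddCommGroup Z) (_ : Module B' Z)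
      (j : (LinearMap.ker ιbar) →ₗ[B'] Z)
      (p : Z →ₗ[B'] (F₀ ⧸ (J • ⊤ : Submodule B' F₀)))
      (g : ((LinearMap.ker ε) ⧸ (J • ⊤ : Submodule B' (LinearMap.ker ε))) →ₗ[B'] Z),
      (∀ c ∈ J, ∀ z : Z, c • z = 0) ∧
      Injective j ∧ Surjective p ∧ LinearMap.range j = LinearMap.ker p ∧
      p.comp g = ιbar ∧ g.comp (LinearMap.ker ιbar).subtype = j := by
  classical
  obtain ⟨N'', _, _, ⟨e⟩, htor⟩ := hlift
  have μinj : Injective (Stmt3Aux.mulMap B' J N'') := Stmt3Aux.injective_mulMap B' J N'' htor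
  -- J kills N
  have hJN : ∀ c ∈ J, ∀ n : N, c • n = 0 := by
    intro c hc n
    calc c • n = (algebraMap B' (B' ⧸ J) c) • n := (algebraMap_smul _ c n).symm
      _ = 0 := by
          rw [Ideal.Quotient.algebraMap_eq, Ideal.Quotient.eq_zero_iff_mem.2 hc, zero_smul]
  -- the reduction map ρ : N'' → N and its kernel
  set ρ : N'' →ₗ[B'] N :=
    e.toLinearMap ∘ₗ ((TensorProduct.mk B' N'' (B' ⧸ J)).flip (1 : B' ⧸ J)) with hρdef
  have hρ_apply : ∀ n : N'', ρ n = e (n ⊗ₜ (1 : B' ⧸ J)) := fun n => rfl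
  have hone : (1 : B' ⧸ J) = Ideal.Quotient.mk J 1 := (map_one _).symm
  have hν : ∀ n : N'', (TensorProduct.tensorQuotEquivQuotSMul N'' J) (n ⊗ₜ (1 : B' ⧸ J))
      = Submodule.Quotient.mk n := by
    intro n
    change (TensorProduct.quotTensorEquivQuotSMul N'' J)
      ((TensorProduct.comm B' N'' (B' ⧸ J)) (n ⊗ₜ 1)) = _
    rw [TensorProduct.comm_tmul, hone, TensorProduct.quotTensorEquivQuotSMul_mk_tmul, one_smul]
  have hkerρ : ∀ n : N'', ρ n = 0 ↔ n ∈ (J • ⊤ : Submodule B' N'') := by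
    intro n
    rw [hρ_apply, LinearEquiv.map_eq_zero_iff,
      ← (TensorProduct.tensorQuotEquivQuotSMul N'' J).map_eq_zero_iff, hν,
      Submodule.Quotient.mk_eq_zero]
  -- ρ is surjective
  have hρsurj : Surjective ρ := by
    have key : ∀ t : N'' ⊗[B'] (B' ⧸ J), ∃ m : N'', ρ m = e t := by
      intro t
      induction t with
      | zero => exact ⟨0, by rw [map_zero, map_zero]⟩
      | tmul n q =>
        obtain ⟨b, rfl⟩ := Ideal.Quotient.mk_surjective q
        refine ⟨b • n, ?_⟩
        rw [hρ_apply, TensorProduct.smul_tmul]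
        congr 1
        rw [hone, ← Ideal.Quotient.mk_eq_mk, ← Ideal.Quotient.mk_eq_mk,
          ← Submodule.Quotient.mk_smul, smul_eq_mul, mul_one]
      | add x y hx hy =>
        obtain ⟨mx, hmx⟩ := hx
        obtain ⟨my, hmy⟩ := hy
        exact ⟨mx + my, by rw [map_add, map_add, hmx, hmy]⟩
    intro n0
    obtain ⟨t, ht⟩ := e.surjective n0
    obtain ⟨m, hm⟩ := key t
    exact ⟨m, by rw [hm, ht]⟩
  -- lift ε to φ : F₀ → N''
  set bb := Module.Free.chooseBasis B' F₀ with hbb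
  set sec : N → N'' := surjInv hρsurj with hsec
  set φ : F₀ →ₗ[B'] N'' := bb.constr ℕ (fun i => sec (ε (bb i))) with hφdef
  have hρφ : ∀ x : F₀, ρ (φ x) = ε x := by
    have : ρ.comp φ = ε := by
      refine bb.ext fun i => ?_
      rw [LinearMap.comp_apply, hφdef, Module.Basis.constr_basis, hsec, surjInv_eq hρsurj]
    intro x; rw [← this]; rfl
  -- every element of N'' is a lift modulo J•N''
  have hstar : ∀ n : N'', ∃ x : F₀, n - φ x ∈ (J • ⊤ : Submodule B' N'') := by
    intro n
    obtain ⟨x, hx⟩ := hε (ρ n)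
    exact ⟨x, (hkerρ _).1 (by rw [map_sub, hρφ, hx, sub_self])⟩
  have hJrange : (J • ⊤ : Submodule B' N'') ≤ LinearMap.range φ := by
    intro m hm
    refine Submodule.smul_induction_on hm (fun c hc n _ => ?_)
      (fun a b ha hb => Submodule.add_mem _ ha hb)
    obtain ⟨x, hx⟩ := hstar n
    have h0 : c • (n - φ x) = 0 := Stmt3Aux.smul_smul_top_zero hJ hc hx
    have h1 : c • n = c • φ x := by rwa [smul_sub, sub_eq_zero] at h0
    exact ⟨c • x, by rw [map_smul, ← h1]⟩
  have hφsurj : Surjective φ := by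
    intro n
    obtain ⟨x, hx⟩ := hstar n
    obtain ⟨y, hy⟩ := hJrange hx
    exact ⟨x + y, by rw [map_add, hy]; abel⟩
  -- submodules
  have hJF_N₁ : ∀ x ∈ (J • ⊤ : Submodule B' F₀), ε x = 0 := by
    intro x hx
    refine Submodule.smul_induction_on hx (fun c hc f _ => ?_) (fun a b ha hb => ?_)
    · rw [map_smul, hJN c hc]
    · rw [map_add, ha, hb, add_zero]
  have hcoe : ∀ y : ↥(LinearMap.ker ε), y ∈ (J • ⊤ : Submodule B' ↥(LinearMap.ker ε)) → (↑y : F₀) ∈ (J • ⊤ : Submodule B' F₀) := by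
    intro y hy
    have hle : (J • ⊤ : Submodule B' ↥(LinearMap.ker ε)).map (LinearMap.ker ε).subtype ≤ (J • ⊤ : Submodule B' F₀) := by
      rw [Submodule.map_smul'']
      exact Submodule.smul_mono le_rfl le_top
    exact hle ⟨y, hy, rfl⟩
  -- the key consequence of Tor-vanishing
  have hkey : ∀ y : ↥(LinearMap.ker ε), (↑y : F₀) ∈ (J • ⊤ : Submodule B' F₀) → φ ↑y = 0 → y ∈ (J • ⊤ : Submodule B' ↥(LinearMap.ker ε)) := by
    intro y hyJF hyφ
    have hmem : (↑y : F₀) ∈ LinearMap.range (Stmt3Aux.mulMap B' J F₀) := by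
      rw [Stmt3Aux.range_mulMap]; exact hyJF
    obtain ⟨u, hu⟩ := hmem
    have hcomm : ∀ v : ↥J ⊗[B'] F₀,
        Stmt3Aux.mulMap B' J N'' ((LinearMap.lTensor ↥J φ) v)
          = φ (Stmt3Aux.mulMap B' J F₀ v) := by
      intro v
      induction v with
      | zero => simp only [map_zero]
      | tmul c f =>
        rw [LinearMap.lTensor_tmul, Stmt3Aux.mulMap_tmul, Stmt3Aux.mulMap_tmul, map_smul]
      | add a b ha hb => rw [map_add, map_add, map_add, map_add, ha, hb]
    have h1 : (LinearMap.lTensor ↥J φ) u = 0 := by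
      apply μinj
      rw [hcomm, hu, hyφ, map_zero]
    have hexseq : Function.Exact (LinearMap.lTensor ↥J (LinearMap.ker φ).subtype)
        (LinearMap.lTensor ↥J φ) :=
      lTensor_exact ↥J (LinearMap.exact_subtype_ker_map φ) hφsurj
    obtain ⟨v, hv⟩ := (hexseq u).1 h1
    have hkerε : ∀ k : ↥(LinearMap.ker φ), (↑k : F₀) ∈ (LinearMap.ker ε) := by
      intro k
      have h7 : ε ↑k = ρ (φ ↑k) := (hρφ _).symm
      rw [LinearMap.mem_ker, h7, LinearMap.mem_ker.mp k.2, map_zero]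
    obtain ⟨incl, hincl⟩ : ∃ incl : ↥(LinearMap.ker φ) →ₗ[B'] ↥(LinearMap.ker ε),
        ∀ k : ↥(LinearMap.ker φ), (incl k : F₀) = ↑k :=
      ⟨LinearMap.codRestrict (LinearMap.ker ε) (LinearMap.ker φ).subtype hkerε, fun k => rfl⟩
    have hcomm2 : ∀ vv : ↥J ⊗[B'] ↥(LinearMap.ker φ),
        (LinearMap.ker ε).subtype (Stmt3Aux.mulMap B' J ↥(LinearMap.ker ε) ((LinearMap.lTensor ↥J incl) vv))
          = Stmt3Aux.mulMap B' J F₀ ((LinearMap.lTensor ↥J (LinearMap.ker φ).subtype) vv) := by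
      intro vv
      induction vv with
      | zero => simp only [map_zero]
      | tmul c k =>
        rw [LinearMap.lTensor_tmul, LinearMap.lTensor_tmul, Stmt3Aux.mulMap_tmul,
          Stmt3Aux.mulMap_tmul, map_smul]
        exact congrArg (fun w => (c : B') • w) (hincl k)
      | add a b ha hb => rw [map_add, map_add, map_add, map_add, map_add, ha, hb]
    have heq : Stmt3Aux.mulMap B' J ↥(LinearMap.ker ε) ((LinearMap.lTensor ↥J incl) v) = y := by
      apply Subtype.ext
      change (LinearMap.ker ε).subtype (Stmt3Aux.mulMap B' J ↥(LinearMap.ker ε) ((LinearMap.lTensor ↥J incl) v)) = ↑y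
      rw [hcomm2, hv, hu]
    rw [← Stmt3Aux.range_mulMap, ← heq]
    exact LinearMap.mem_range_self _ _
  -- membership in T = ker ιbar
  have hmemT : ∀ y : ↥(LinearMap.ker ε), (Submodule.Quotient.mk y ∈ LinearMap.ker ιbar) ↔ (↑y : F₀) ∈ (J • ⊤ : Submodule B' F₀) := by
    intro y
    rw [LinearMap.mem_ker, hιbar y, Submodule.Quotient.mk_eq_zero]
  -- the retraction σ
  set Kφ : Submodule B' ↥(LinearMap.ker ε) := LinearMap.ker (φ.comp (LinearMap.ker ε).subtype) with hKφ
  set Kbar : Submodule B' (↥(LinearMap.ker ε) ⧸ (J • ⊤ : Submodule B' ↥(LinearMap.ker ε))) := Kφ.map (J • ⊤ : Submodule B' ↥(LinearMap.ker ε)).mkQ with hKbar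
  set β : ↥(LinearMap.ker ιbar) →ₗ[B'] ((↥(LinearMap.ker ε) ⧸ (J • ⊤ : Submodule B' ↥(LinearMap.ker ε))) ⧸ Kbar) :=
    Kbar.mkQ ∘ₗ (LinearMap.ker ιbar).subtype with hβ
  have hβinj : Injective β := by
    refine (injective_iff_map_eq_zero β).2 fun t h0 => ?_
    obtain ⟨y₀, hy₀⟩ := Submodule.Quotient.mk_surjective (J • ⊤ : Submodule B' ↥(LinearMap.ker ε)) (↑t : ↥(LinearMap.ker ε) ⧸ (J • ⊤ : Submodule B' ↥(LinearMap.ker ε)))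
    have hy₀JF : (↑y₀ : F₀) ∈ (J • ⊤ : Submodule B' F₀) := (hmemT y₀).1 (by rw [hy₀]; exact t.2)
    have hmem : (↑t : ↥(LinearMap.ker ε) ⧸ (J • ⊤ : Submodule B' ↥(LinearMap.ker ε))) ∈ Kbar := (Submodule.Quotient.mk_eq_zero _).1 h0
    obtain ⟨k, hk, hk2⟩ := hmem
    have hdiff : k - y₀ ∈ (J • ⊤ : Submodule B' ↥(LinearMap.ker ε)) := by
      rw [← Submodule.Quotient.eq]
      change (J • ⊤ : Submodule B' ↥(LinearMap.ker ε)).mkQ k = Submodule.Quotient.mk y₀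
      rw [hk2, hy₀]
    have hkJF : (↑k : F₀) ∈ (J • ⊤ : Submodule B' F₀) := by
      have h3 : (↑(k - y₀) : F₀) ∈ (J • ⊤ : Submodule B' F₀) := hcoe _ hdiff
      have h4 : (↑k : F₀) = ↑y₀ + ↑(k - y₀) := by
        push_cast; abel
      rw [h4]
      exact Submodule.add_mem _ hy₀JF h3
    have h5 : k ∈ (J • ⊤ : Submodule B' ↥(LinearMap.ker ε)) := hkey k hkJF hk
    have h6 : (↑t : ↥(LinearMap.ker ε) ⧸ (J • ⊤ : Submodule B' ↥(LinearMap.ker ε))) = 0 := by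
      rw [← hk2]
      exact (Submodule.Quotient.mk_eq_zero _).2 h5
    exact Subtype.ext h6
  have hβsurj : Surjective β := by
    intro q
    obtain ⟨nb, rfl⟩ := Submodule.Quotient.mk_surjective Kbar q
    obtain ⟨y, rfl⟩ := Submodule.Quotient.mk_surjective (J • ⊤ : Submodule B' ↥(LinearMap.ker ε)) nb
    have h1 : ρ (φ ↑y) = 0 := by rw [hρφ]; exact y.2
    have h2 : φ ↑y ∈ (J • ⊤ : Submodule B' N'') := (hkerρ _).1 h1
    have h3 : (J • ⊤ : Submodule B' F₀).map φ = (J • ⊤ : Submodule B' N'') := by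
      rw [Submodule.map_smul'', Submodule.map_top, LinearMap.range_eq_top.2 hφsurj]
    rw [← h3] at h2
    obtain ⟨x₀, hx₀JF, hx₀⟩ := h2
    have hx₀N₁ : x₀ ∈ (LinearMap.ker ε) := by rw [LinearMap.mem_ker]; exact hJF_N₁ x₀ hx₀JF
    set y3 : ↥(LinearMap.ker ε) := ⟨x₀, hx₀N₁⟩ with hy3
    have hyk : y3 - y ∈ Kφ := by
      rw [LinearMap.mem_ker, LinearMap.comp_apply, map_sub]
      change φ (↑y3 - ↑y) = 0
      rw [map_sub]
      change φ x₀ - φ ↑y = 0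
      rw [hx₀, sub_self]
    have hT3 : Submodule.Quotient.mk y3 ∈ LinearMap.ker ιbar := (hmemT y3).2 hx₀JF
    refine ⟨⟨Submodule.Quotient.mk y3, hT3⟩, ?_⟩
    change Kbar.mkQ (Submodule.Quotient.mk y3) = Submodule.Quotient.mk (Submodule.Quotient.mk y)
    change Submodule.Quotient.mk (Submodule.Quotient.mk y3)
      = Submodule.Quotient.mk (Submodule.Quotient.mk y)
    rw [Submodule.Quotient.eq]
    have : (Submodule.Quotient.mk y3 : ↥(LinearMap.ker ε) ⧸ (J • ⊤ : Submodule B' ↥(LinearMap.ker ε))) - Submodule.Quotient.mk y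
        = (J • ⊤ : Submodule B' ↥(LinearMap.ker ε)).mkQ (y3 - y) := by rw [map_sub]; rfl
    rw [this]
    exact Submodule.mem_map_of_mem hyk
  set βe := LinearEquiv.ofBijective β ⟨hβinj, hβsurj⟩ with hβe
  set σ : (↥(LinearMap.ker ε) ⧸ (J • ⊤ : Submodule B' ↥(LinearMap.ker ε))) →ₗ[B'] ↥(LinearMap.ker ιbar) := βe.symm.toLinearMap ∘ₗ Kbar.mkQ with hσ
  have hσT : ∀ t : ↥(LinearMap.ker ιbar), σ ↑t = t := by
    intro t
    change βe.symm (Kbar.mkQ ↑t) = t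
    have h1 : Kbar.mkQ ↑t = βe t := rfl
    rw [h1, LinearEquiv.symm_apply_apply]
  -- assemble
  refine ⟨(↥(LinearMap.ker ιbar)) × (F₀ ⧸ (J • ⊤ : Submodule B' F₀)), inferInstance, inferInstance,
    LinearMap.inl B' _ _, LinearMap.snd B' _ _, LinearMap.prod σ ιbar,
    ?_, ?_, ?_, ?_, ?_, ?_⟩
  · intro c hc z
    have h1 : c • z.1 = 0 := by
      apply Subtype.ext
      change c • (↑z.1 : ↥(LinearMap.ker ε) ⧸ (J • ⊤ : Submodule B' ↥(LinearMap.ker ε))) = 0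
      exact Stmt3Aux.smul_quot_zero hc _
    have h2 : c • z.2 = 0 := Stmt3Aux.smul_quot_zero hc z.2
    have h3 : c • z = (c • z.1, c • z.2) := rfl
    rw [h3, h1, h2]
    rfl
  · exact LinearMap.inl_injective
  · exact fun f => ⟨(0, f), rfl⟩
  · apply le_antisymm
    · rintro _ ⟨a, rfl⟩
      simp
    · rintro ⟨a, b⟩ hab
      have hb : b = 0 := hab
      exact ⟨a, by rw [hb]; rfl⟩
  · exact LinearMap.ext fun x => rfl
  · refine LinearMap.ext fun t => ?_
    have h1 : (LinearMap.prod σ ιbar) (↑t) = (σ ↑t, ιbar ↑t) := rfl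
    have h2 : ιbar ↑t = 0 := t.2
    change (σ ↑t, ιbar ↑t) = (t, 0)
    rw [hσT, h2]
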